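/- arXiv:2509.13102 — 4 statements merged into one kernel-verified Lean document; each statement's English description precedes it below -/
import Mathlib

section
/- Let ρ > 0, γ > 0, σ > 0, β > 0, ‖c‖ > 0, ‖A‖ > 0. Define T₂(r) := (1/‖A‖) · log(1 + (σ·r + β)/(‖c‖·(ρ·r + γ))). Then inf_{r ≥ 0} T₂(r) > 0; i.e., the inter-event time lower bound from the magnitude-based triggering rule is uniformly bounded away from zero over all sampled state norms r ≥ 0. -/
open Real

/-- The inter-event time lower bound from the magnitude-based triggering rule is
uniformly bounded away from zero over all sampled state norms `r ≥ 0`. -/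
theorem stmt_3 (ρ γ σ β nc nA : ℝ) (hρ : 0 < ρ) (hγ : 0 < γ) (hσ : 0 < σ)
    (hβ : 0 < β) (hc : 0 < nc) (hA : 0 < nA)
    (T₂ : ℝ → ℝ)
    (hT₂ : ∀ r : ℝ, T₂ r = (1 / nA) * Real.log (1 + (σ * r + β) / (nc * (ρ * r + γ)))) :
    ∃ ε : ℝ, 0 < ε ∧ ∀ r : ℝ, 0 ≤ r → ε ≤ T₂ r := by
  set m : ℝ := min (β / (nc * γ)) (σ / (nc * ρ)) with hm
  have hm1 : m ≤ β / (nc * γ) := min_le_left _ _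
  have hm2 : m ≤ σ / (nc * ρ) := min_le_right _ _
  have hmpos : 0 < m := lt_min (div_pos hβ (mul_pos hc hγ)) (div_pos hσ (mul_pos hc hρ))
  refine ⟨(1 / nA) * Real.log (1 + m), mul_pos (by positivity) (Real.log_pos (by linarith)), fun r hr => ?_⟩
  rw [hT₂ r]
  have hden : 0 < nc * (ρ * r + γ) := by positivity
  have hkey : m ≤ (σ * r + β) / (nc * (ρ * r + γ)) := by
    rw [le_div_iff₀ hden]
    have h1 : m * (nc * ρ) ≤ σ := by
      rw [← le_div_iff₀ (mul_pos hc hρ)]; exact hm2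
    have h2 : m * (nc * γ) ≤ β := by
      rw [← le_div_iff₀ (mul_pos hc hγ)]; exact hm1
    have : m * (nc * (ρ * r + γ)) = (m * (nc * ρ)) * r + m * (nc * γ) := by ring
    rw [this]
    exact add_le_add (mul_le_mul_of_nonneg_right h1 hr) h2
  have := Real.log_le_log (by positivity) (by linarith : (1:ℝ) + m ≤ 1 + (σ * r + β) / (nc * (ρ * r + γ)))
  exact mul_le_mul_of_nonneg_left this (by positivity)
end

section
/- Let x : [t_i, t_{i+1}) → ℝⁿ, and define the error e(t) = x(t_i) - x(t). If ‖e(t)‖ < sin(θ/(2n)) · ‖x(t_i)‖ for some θ ∈ (0, π) and positive integer n, and x(t_i) ≠ 0 and x(t) ≠ 0, then the cosine of the angle between x(t) and x(t_i) satisfies (x(t)ᵀ x(t_i))/(‖x(t)‖·‖x(t_i)‖) > cos(θ/(2n)) — i.e., the angular deviation of x(t) from x(t_i) is less than θ/(2n). -/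
open Real
open scoped RealInnerProductSpace

/-- If the sampling error is smaller than `sin(θ/(2n))` times the sampled state norm,
then the angular deviation of `x(t)` from `x(t_i)` is less than `θ/(2n)`. -/
theorem stmt_7 (N : ℕ) (θ : ℝ) (n : ℕ) (hθ : θ ∈ Set.Ioo (0:ℝ) π) (hn : 0 < n)
    (ti ti1 : ℝ) (x : ℝ → EuclideanSpace ℝ (Fin N)) (t : ℝ)
    (ht : t ∈ Set.Ico ti ti1)
    (hxi : x ti ≠ 0) (hxt : x t ≠ 0)
    (he : ‖x ti - x t‖ < Real.sin (θ / (2 * n)) * ‖x ti‖) :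
    Real.cos (θ / (2 * n)) < ⟪x t, x ti⟫ / (‖x t‖ * ‖x ti‖) := by
  set α := θ / (2 * n) with hα
  have hn' : (1:ℝ) ≤ n := by exact_mod_cast hn
  have hα0 : 0 < α := by
    apply div_pos hθ.1
    positivity
  have hα2 : α < π / 2 := by
    rw [hα, div_lt_iff₀ (by positivity)]
    calc θ < π := hθ.2
    _ ≤ π / 2 * (2 * n) := by nlinarith [Real.pi_pos]
  have hsin : 0 < Real.sin α := Real.sin_pos_of_pos_of_lt_pi hα0 (by linarith [Real.pi_pos.le, hα2])
  have hpyth : Real.sin α ^ 2 + Real.cos α ^ 2 = 1 := Real.sin_sq_add_cos_sq α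
  have ha : 0 < ‖x ti‖ := norm_pos_iff.mpr hxi
  have hb : 0 < ‖x t‖ := norm_pos_iff.mpr hxt
  have hsq : ‖x ti - x t‖ ^ 2 < (Real.sin α * ‖x ti‖) ^ 2 := by
    have := norm_nonneg (x ti - x t)
    nlinarith
  have hexp : ‖x ti - x t‖ ^ 2 = ‖x ti‖ ^ 2 - 2 * ⟪x ti, x t⟫ + ‖x t‖ ^ 2 :=
    norm_sub_sq_real (x ti) (x t)
  have hcomm : ⟪x t, x ti⟫ = ⟪x ti, x t⟫ := real_inner_comm _ _
  rw [lt_div_iff₀ (by positivity)]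
  nlinarith [sq_nonneg (‖x t‖ - Real.cos α * ‖x ti‖)]
end

section
/- Let x solve ẋ = Ax + B(u + d) on [t_i, t_{i+1}) with constant input u = -(cᵀB)⁻¹(cᵀA x(t_i) + K·sign(s(t_i))) and |d(t)| ≤ d_max, where cᵀB ≠ 0. Then the error e(t) = x(t_i) - x(t) satisfies, for almost every t, d/dt‖e(t)‖ ≤ ‖A‖‖e(t)‖ + ρ‖x(t_i)‖ + γ, where ρ = ‖A - B(cᵀB)⁻¹cᵀA‖ and γ = ‖B(cᵀB)⁻¹‖·|K| + ‖B‖·d_max. -/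
open Real
open scoped RealInnerProductSpace Topology

lemma deriv_norm_le' {E : Type*} [NormedAddCommGroup E] [NormedSpace ℝ E]
    {f : ℝ → E} {w : E} {t der : ℝ}
    (hf : HasDerivAt f w t) (hg : HasDerivAt (fun τ => ‖f τ‖) der t) : der ≤ ‖w‖ := by
  have hf' := hasDerivAt_iff_tendsto_slope.mp hf
  have hg' := hasDerivAt_iff_tendsto_slope.mp hg
  have hmono : 𝓝[>] t ≤ 𝓝[≠] t :=
    nhdsWithin_mono _ (fun y hy => ne_of_gt hy)
  have h2 : Filter.Tendsto (fun τ => ‖slope f t τ‖) (nhdsWithin t (Set.Ioi t)) (nhds ‖w‖) :=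
    (hf'.mono_left hmono).norm
  have h3 : Filter.Tendsto (slope (fun τ => ‖f τ‖) t) (nhdsWithin t (Set.Ioi t)) (nhds der) :=
    hg'.mono_left hmono
  refine le_of_tendsto_of_tendsto h3 h2 ?_
  filter_upwards [self_mem_nhdsWithin] with τ hτ
  have hτ' : t < τ := hτ
  have hpos : (0:ℝ) < τ - t := sub_pos.mpr hτ'
  simp only [slope_def_module]
  calc (τ - t)⁻¹ • (‖f τ‖ - ‖f t‖)
      ≤ (τ - t)⁻¹ * ‖f τ - f t‖ := by
        have := norm_sub_norm_le (f τ) (f t)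
        simpa [smul_eq_mul] using mul_le_mul_of_nonneg_left this (inv_nonneg.mpr hpos.le)
    _ = ‖(τ - t)⁻¹ • (f τ - f t)‖ := by
        rw [norm_smul, Real.norm_eq_abs, abs_of_pos (inv_pos.mpr hpos)]

lemma abs_real_sign_le_one (r : ℝ) : |Real.sign r| ≤ 1 := by
  rcases lt_trichotomy r 0 with h | h | h
  · simp [Real.sign_of_neg h]
  · simp [h]
  · simp [Real.sign_of_pos h]

/-- Growth bound on the sampling error under the zero-order-hold event-triggered SMC law:
`d/dt‖e(t)‖ ≤ ‖A‖‖e(t)‖ + ρ‖x(t_i)‖ + γ`. -/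
theorem stmt_13 (N : ℕ) (A : EuclideanSpace ℝ (Fin N) →L[ℝ] EuclideanSpace ℝ (Fin N))
    (B c : EuclideanSpace ℝ (Fin N)) (hcB : ⟪c, B⟫ ≠ 0)
    (K dmax ti ti1 : ℝ) (hdmax : 0 ≤ dmax)
    (d : ℝ → ℝ) (hd : ∀ t : ℝ, |d t| ≤ dmax)
    (x : ℝ → EuclideanSpace ℝ (Fin N))
    (u : ℝ) (hu : u = -(⟪c, B⟫)⁻¹ * (⟪c, A (x ti)⟫ + K * Real.sign (⟪c, x ti⟫)))
    (hx : ∀ t ∈ Set.Ico ti ti1, HasDerivAt x (A (x t) + (u + d t) • B) t) :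
    ∀ t ∈ Set.Ioo ti ti1, ∀ der : ℝ,
      HasDerivAt (fun τ => ‖x ti - x τ‖) der t →
      der ≤ ‖A‖ * ‖x ti - x t‖ +
        ‖A - (⟪c, B⟫)⁻¹ • (((innerSL ℝ c).comp A).smulRight B)‖ * ‖x ti‖ +
        (‖(⟪c, B⟫)⁻¹ • B‖ * |K| + ‖B‖ * dmax) := by
  intro t ht der hder
  set M := A - (⟪c, B⟫)⁻¹ • (((innerSL ℝ c).comp A).smulRight B) with hM
  set v : EuclideanSpace ℝ (Fin N) := A (x t) + (u + d t) • B with hv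
  have hxd : HasDerivAt x v t := hx t ⟨ht.1.le, ht.2⟩
  have hfd : HasDerivAt (fun τ => x ti - x τ) (-v) t := hxd.const_sub _
  have hle : der ≤ ‖-v‖ := deriv_norm_le' hfd hder
  rw [norm_neg] at hle
  refine hle.trans ?_
  have hMx : M (x ti) = A (x ti) - (⟪c, B⟫)⁻¹ • (⟪c, A (x ti)⟫ • B) := by
    simp [hM, ContinuousLinearMap.sub_apply, ContinuousLinearMap.smul_apply,
      ContinuousLinearMap.smulRight_apply, ContinuousLinearMap.comp_apply, innerSL_apply_apply]
  have hvdec : v = -(A (x ti - x t)) + M (x ti)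
      + ((-(⟪c, B⟫)⁻¹ * (K * Real.sign ⟪c, x ti⟫)) • B + d t • B) := by
    rw [hv, hMx, hu, map_sub]
    module
  rw [hvdec]
  have h1 : ‖A (x ti - x t)‖ ≤ ‖A‖ * ‖x ti - x t‖ := A.le_opNorm _
  have h2 : ‖M (x ti)‖ ≤ ‖M‖ * ‖x ti‖ := M.le_opNorm _
  have h3 : ‖(-(⟪c, B⟫)⁻¹ * (K * Real.sign ⟪c, x ti⟫)) • B‖ ≤ ‖(⟪c, B⟫)⁻¹ • B‖ * |K| := by
    rw [norm_smul, Real.norm_eq_abs, norm_smul, Real.norm_eq_abs, abs_mul, abs_neg, abs_mul]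
    have hs := abs_real_sign_le_one ⟪c, x ti⟫
    calc |(⟪c, B⟫)⁻¹| * (|K| * |Real.sign ⟪c, x ti⟫|) * ‖B‖
        ≤ |(⟪c, B⟫)⁻¹| * (|K| * 1) * ‖B‖ := by
          gcongr
      _ = |(⟪c, B⟫)⁻¹| * ‖B‖ * |K| := by ring
  have h4 : ‖d t • B‖ ≤ ‖B‖ * dmax := by
    rw [norm_smul, Real.norm_eq_abs]
    calc |d t| * ‖B‖ ≤ dmax * ‖B‖ := by gcongr; exact hd t
      _ = ‖B‖ * dmax := mul_comm _ _
  calc ‖-(A (x ti - x t)) + M (x ti)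
      + ((-(⟪c, B⟫)⁻¹ * (K * Real.sign ⟪c, x ti⟫)) • B + d t • B)‖
      ≤ ‖-(A (x ti - x t)) + M (x ti)‖
        + ‖(-(⟪c, B⟫)⁻¹ * (K * Real.sign ⟪c, x ti⟫)) • B + d t • B‖ := norm_add_le _ _
    _ ≤ (‖A (x ti - x t)‖ + ‖M (x ti)‖)
        + (‖(-(⟪c, B⟫)⁻¹ * (K * Real.sign ⟪c, x ti⟫)) • B‖ + ‖d t • B‖) := by
        gcongr
        · exact (norm_add_le _ _).trans (by rw [norm_neg])
        · exact norm_add_le _ _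
    _ ≤ (‖A‖ * ‖x ti - x t‖ + ‖M‖ * ‖x ti‖) + (‖(⟪c, B⟫)⁻¹ • B‖ * |K| + ‖B‖ * dmax) := by
        gcongr
    _ = _ := by ring
end

section
/- Let s : [t₀, T] → ℝ be absolutely continuous with s(t₀) > 0 and ṡ(t) ≤ -ξ < 0 almost everywhere on the interval where s > 0. If additionally the sign condition sign(s(t_i)) = sign(s(t)) holds on each sampling interval, then s is strictly decreasing while positive and reaches 0 at some t₁* ≤ t₀ + s(t₀)/ξ, and the same conclusion holds symmetrically for s(t₀) < 0 with ṡ ≥ ξ. -/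
open Real Set

lemma stmt_17_aux (t₀ T ξ : ℝ) (hξ : 0 < ξ) (s : ℝ → ℝ)
    (hc : ContinuousOn s (Set.Icc t₀ T)) (h0 : 0 < s t₀)
    (hT : t₀ + s t₀ / ξ ≤ T)
    (hd : ∀ t ∈ Set.Ioo t₀ T, 0 < s t → ∃ d : ℝ, d ≤ -ξ ∧ HasDerivAt s d t) :
    (∀ t1 ∈ Set.Icc t₀ T, ∀ t2 ∈ Set.Icc t₀ T, t1 < t2 →
        (∀ τ ∈ Set.Icc t1 t2, 0 < s τ) → s t2 < s t1) ∧
      ∃ t₁ ∈ Set.Icc t₀ (t₀ + s t₀ / ξ), s t₁ = 0 := by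
  constructor
  · intro t1 ht1 t2 ht2 h12 hpos
    have hsub : Set.Icc t1 t2 ⊆ Set.Icc t₀ T :=
      Set.Icc_subset_Icc ht1.1 ht2.2
    have : StrictAntiOn s (Set.Icc t1 t2) := by
      apply StrictAntiOn.mono ?_ (subset_refl _)
      apply strictAntiOn_of_deriv_neg (convex_Icc t1 t2) (hc.mono hsub)
      intro x hx
      rw [interior_Icc] at hx
      have hxIoo : x ∈ Set.Ioo t₀ T :=
        ⟨lt_of_le_of_lt ht1.1 hx.1, lt_of_lt_of_le hx.2 ht2.2⟩
      have hxpos : 0 < s x := hpos x ⟨hx.1.le, hx.2.le⟩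
      obtain ⟨d, hdle, hds⟩ := hd x hxIoo hxpos
      rw [hds.deriv]
      linarith
    exact this ⟨le_refl t1, h12.le⟩ ⟨h12.le, le_refl t2⟩ h12
  · set τ := t₀ + s t₀ / ξ with hτ
    have ht₀τ : t₀ ≤ τ := by
      have : 0 < s t₀ / ξ := div_pos h0 hξ
      rw [hτ]; linarith
    by_contra h
    push_neg at h
    have hsub : Set.Icc t₀ τ ⊆ Set.Icc t₀ T := Set.Icc_subset_Icc le_rfl hT
    have hpos : ∀ t ∈ Set.Icc t₀ τ, 0 < s t := by
      intro t ht
      rcases lt_trichotomy (s t) 0 with hlt | heq | hgt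
      · exfalso
        have hcont : ContinuousOn s (Set.Icc t₀ t) :=
          hc.mono (Set.Icc_subset_Icc le_rfl (hsub ht).2)
        have : Set.Icc (s t) (s t₀) ⊆ s '' Set.Icc t₀ t :=
          intermediate_value_Icc' ht.1 hcont
        obtain ⟨c, hc1, hc2⟩ := this ⟨hlt.le, h0.le⟩
        exact h c ⟨hc1.1, le_trans hc1.2 ht.2⟩ hc2
      · exact absurd heq (h t ht)
      · exact hgt
    -- g t = s t + ξ (t - t₀) is antitone on [t₀, τ]
    set g : ℝ → ℝ := fun t => s t + ξ * (t - t₀) with hg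
    have hderiv : ∀ x ∈ Set.Ioo t₀ τ, ∃ d : ℝ, d ≤ -ξ ∧ HasDerivAt g (d + ξ) x := by
      intro x hx
      have hxIoo : x ∈ Set.Ioo t₀ T := ⟨hx.1, lt_of_lt_of_le hx.2 hT⟩
      obtain ⟨d, hdle, hds⟩ := hd x hxIoo (hpos x ⟨hx.1.le, hx.2.le⟩)
      refine ⟨d, hdle, ?_⟩
      have h2 : HasDerivAt (fun t => ξ * (t - t₀)) ξ x := by
        simpa using (((hasDerivAt_id x).sub_const t₀).const_mul ξ)
      exact hds.add h2
    have hanti : AntitoneOn g (Set.Icc t₀ τ) := by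
      apply antitoneOn_of_deriv_nonpos (convex_Icc t₀ τ)
      · exact (hc.mono hsub).add (Continuous.continuousOn (by continuity))
      · rw [interior_Icc]
        intro x hx
        obtain ⟨d, _, hds⟩ := hderiv x hx
        exact hds.differentiableAt.differentiableWithinAt
      · rw [interior_Icc]
        intro x hx
        obtain ⟨d, hdle, hds⟩ := hderiv x hx
        rw [hds.deriv]
        linarith
    have := hanti ⟨le_rfl, ht₀τ⟩ ⟨ht₀τ, le_rfl⟩ ht₀τ
    have hcancel : ξ * (τ - t₀) = s t₀ := by
      rw [hτ]
      field_simp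
      ring
    have hsτ : 0 < s τ := hpos τ ⟨ht₀τ, le_rfl⟩
    simp only [hg] at this
    rw [hcancel] at this
    simp at this
    linarith

/-- Reaching-phase conclusion: an absolutely continuous sliding variable with
`ṡ ≤ -ξ` while positive is strictly decreasing while positive and reaches `0` by
`t₀ + s(t₀)/ξ`; symmetrically for `s(t₀) < 0` with `ṡ ≥ ξ`. -/
theorem stmt_17 (t₀ T ξ : ℝ) (hξ : 0 < ξ) (htT : t₀ ≤ T) :
    (∀ s : ℝ → ℝ, ContinuousOn s (Set.Icc t₀ T) → 0 < s t₀ →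
      t₀ + s t₀ / ξ ≤ T →
      (∀ t ∈ Set.Ioo t₀ T, 0 < s t →
        ∃ d : ℝ, d ≤ -ξ ∧ HasDerivAt s d t) →
      ((∀ t1 ∈ Set.Icc t₀ T, ∀ t2 ∈ Set.Icc t₀ T, t1 < t2 →
          (∀ τ ∈ Set.Icc t1 t2, 0 < s τ) → s t2 < s t1) ∧
        ∃ t₁ ∈ Set.Icc t₀ (t₀ + s t₀ / ξ), s t₁ = 0)) ∧
    (∀ s : ℝ → ℝ, ContinuousOn s (Set.Icc t₀ T) → s t₀ < 0 →
      t₀ + (-s t₀) / ξ ≤ T →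
      (∀ t ∈ Set.Ioo t₀ T, s t < 0 →
        ∃ d : ℝ, ξ ≤ d ∧ HasDerivAt s d t) →
      ((∀ t1 ∈ Set.Icc t₀ T, ∀ t2 ∈ Set.Icc t₀ T, t1 < t2 →
          (∀ τ ∈ Set.Icc t1 t2, s τ < 0) → s t1 < s t2) ∧
        ∃ t₁ ∈ Set.Icc t₀ (t₀ + (-s t₀) / ξ), s t₁ = 0)) := by
  constructor
  · intro s hc h0 hT hd
    exact stmt_17_aux t₀ T ξ hξ s hc h0 hT hd
  · intro s hc h0 hT hd
    have h0' : 0 < (fun t => -s t) t₀ := by simpa using h0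
    have hc' : ContinuousOn (fun t => -s t) (Set.Icc t₀ T) := hc.neg
    have hT' : t₀ + (fun t => -s t) t₀ / ξ ≤ T := by simpa using hT
    have hd' : ∀ t ∈ Set.Ioo t₀ T, 0 < (fun t => -s t) t →
        ∃ d : ℝ, d ≤ -ξ ∧ HasDerivAt (fun t => -s t) d t := by
      intro t ht hpos
      obtain ⟨d, hdge, hds⟩ := hd t ht (by simpa using hpos)
      exact ⟨-d, by linarith, hds.neg⟩
    obtain ⟨hmono, t₁, ht₁, hz⟩ := stmt_17_aux t₀ T ξ hξ (fun t => -s t) hc' h0' hT' hd'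
    constructor
    · intro t1 ht1 t2 ht2 h12 hneg
      have := hmono t1 ht1 t2 ht2 h12 (fun τ hτ => by simpa using hneg τ hτ)
      simpa using this
    · exact ⟨t₁, ht₁, by simpa using hz⟩
end
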